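/- Let S be a symmetric positive definite real n̄×n̄ matrix, τ > 0, Γ ∈ ℝ^{n_ζ×n̄}, M ∈ ℝ^{n_x×n_ζ}, ā ∈ ℝ^{n_x}, μ ∈ ℝ^{n_x}, b̄ ∈ ℝ, and ε ≥ 0. If āᵀμ = b̄ and √τ · ‖ΓᵀMᵀā‖_{S⁻¹} ≤ ε, then for all ζ ∈ U = { Γz : zᵀSz ≤ τ } it holds that b̄ − ε ≤ āᵀ(μ + Mζ) ≤ b̄ + ε. -/

import Mathlib

open Matrix

lemma cs_aux {n : ℕ} (S : Matrix (Fin n) (Fin n) ℝ) (hS : S.PosDef)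
    (w z : Fin n → ℝ) :
    (w ⬝ᵥ z) ^ 2 ≤ (w ⬝ᵥ S⁻¹.mulVec w) * (z ⬝ᵥ S.mulVec z) := by
  have hSymm : Sᵀ = S := hS.1.eq
  set u := S⁻¹.mulVec w with hu_def
  have hdet : IsUnit S.det := isUnit_iff_ne_zero.mpr hS.det_pos.ne'
  have hu : S.mulVec u = w := by
    rw [hu_def, mulVec_mulVec, S.mul_nonsing_inv hdet, one_mulVec]
  set a := w ⬝ᵥ S⁻¹.mulVec w with ha_def
  set b := w ⬝ᵥ z with hb_def
  set c := z ⬝ᵥ S.mulVec z with hc_def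
  have hsym : ∀ x y : Fin n → ℝ, (S.mulVec x) ⬝ᵥ y = x ⬝ᵥ S.mulVec y := by
    intro x y
    rw [← hSymm, mulVec_transpose, ← dotProduct_mulVec, hSymm]
  have ha' : u ⬝ᵥ S.mulVec u = a := by
    rw [hu, ha_def, ← hu_def, dotProduct_comm]
  have hb1 : u ⬝ᵥ S.mulVec z = b := by
    rw [← hsym, hu]
  have hb2 : z ⬝ᵥ S.mulVec u = b := by
    calc z ⬝ᵥ S.mulVec u = (S.mulVec u) ⬝ᵥ z := dotProduct_comm _ _
      _ = u ⬝ᵥ S.mulVec z := hsym u z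
      _ = b := hb1
  have key : ∀ t : ℝ, 0 ≤ c * (t * t) + (-2 * b) * t + a := by
    intro t
    have h := hS.posSemidef.dotProduct_mulVec_nonneg (t • z - u)
    have hexp : (t • z - u) ⬝ᵥ S.mulVec (t • z - u)
        = c * (t * t) + (-2 * b) * t + a := by
      rw [mulVec_sub, mulVec_smul, dotProduct_sub, sub_dotProduct,
        sub_dotProduct, smul_dotProduct, smul_dotProduct, dotProduct_smul,
        dotProduct_smul, ha', hb1, hb2, ← hc_def, smul_eq_mul, smul_eq_mul,
        smul_eq_mul]
      ring
    simpa [hexp] using h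
  have hdisc := discrim_le_zero key
  rw [discrim] at hdisc
  nlinarith [hdisc]

/-- If `āᵀμ = b̄` and `√τ·‖ΓᵀMᵀā‖_{S⁻¹} ≤ ε`, then for all `ζ ∈ U` we have
`b̄ − ε ≤ āᵀ(μ + Mζ) ≤ b̄ + ε`. -/
theorem stmt_5 {nζ nbar nx : ℕ}
    (S : Matrix (Fin nbar) (Fin nbar) ℝ) (hS : S.PosDef)
    (τ : ℝ) (hτ : 0 < τ)
    (Γ : Matrix (Fin nζ) (Fin nbar) ℝ) (M : Matrix (Fin nx) (Fin nζ) ℝ)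
    (abar μ : Fin nx → ℝ) (bbar ε : ℝ) (hε : 0 ≤ ε)
    (heq : abar ⬝ᵥ μ = bbar)
    (hbound : Real.sqrt τ *
        Real.sqrt ((Γᵀ.mulVec (Mᵀ.mulVec abar)) ⬝ᵥ
          S⁻¹.mulVec (Γᵀ.mulVec (Mᵀ.mulVec abar))) ≤ ε) :
    ∀ z : Fin nbar → ℝ, z ⬝ᵥ S.mulVec z ≤ τ →
      bbar - ε ≤ abar ⬝ᵥ (μ + M.mulVec (Γ.mulVec z)) ∧
        abar ⬝ᵥ (μ + M.mulVec (Γ.mulVec z)) ≤ bbar + ε := by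
  intro z hz
  set w := Γᵀ.mulVec (Mᵀ.mulVec abar) with hw_def
  have hwz : abar ⬝ᵥ M.mulVec (Γ.mulVec z) = w ⬝ᵥ z := by
    rw [hw_def, dotProduct_mulVec, dotProduct_mulVec, ← mulVec_transpose,
      ← mulVec_transpose]
  set a := w ⬝ᵥ S⁻¹.mulVec w with ha_def
  have ha0 : 0 ≤ a := (hS.inv.posSemidef).dotProduct_mulVec_nonneg w
  have hc0 : 0 ≤ z ⬝ᵥ S.mulVec z := hS.posSemidef.dotProduct_mulVec_nonneg z
  have hcs : (w ⬝ᵥ z) ^ 2 ≤ a * τ := by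
    calc (w ⬝ᵥ z) ^ 2 ≤ a * (z ⬝ᵥ S.mulVec z) := cs_aux S hS w z
      _ ≤ a * τ := by nlinarith
  have habs : |w ⬝ᵥ z| ≤ ε := by
    have h1 : |w ⬝ᵥ z| = Real.sqrt ((w ⬝ᵥ z) ^ 2) := (Real.sqrt_sq_eq_abs _).symm
    have h2 : Real.sqrt ((w ⬝ᵥ z) ^ 2) ≤ Real.sqrt (a * τ) :=
      Real.sqrt_le_sqrt hcs
    have h3 : Real.sqrt (a * τ) = Real.sqrt τ * Real.sqrt a := by
      rw [Real.sqrt_mul ha0, mul_comm]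
    rw [h1]
    exact h2.trans (by rw [h3]; exact hbound)
  have hfin : abar ⬝ᵥ (μ + M.mulVec (Γ.mulVec z)) = bbar + w ⬝ᵥ z := by
    rw [dotProduct_add, heq, hwz]
  rw [hfin]
  rw [abs_le] at habs
  constructor <;> linarith [habs.1, habs.2]
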